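/- Let N ≥ 3, 2 < p < 2 + 4/N < q < 2*, and let a, b, c, d > 0. Then the function l(t) = a t² − b t^{2*} − c t^{γ_p} − d t^{γ_q}, defined for t ∈ (0,∞), has at most two critical points; that is, the set {t > 0 : l'(t) = 0} has at most two elements. -/

import Mathlib

open Real

/-- `γ_s = N(s-2)/2`. -/
noncomputable def gam (N : ℕ) (s : ℝ) : ℝ := (N : ℝ) * (s - 2) / 2

/-- The critical Sobolev exponent `2* = 2N/(N-2)`. -/
noncomputable def twoStar (N : ℕ) : ℝ := 2 * (N : ℝ) / ((N : ℝ) - 2)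

theorem stmt_3 (N : ℕ) (hN : 3 ≤ N) (p q : ℝ)
    (hp : 2 < p) (hpN : p < 2 + 4 / (N : ℝ)) (hNq : 2 + 4 / (N : ℝ) < q)
    (hq : q < twoStar N) (a b c d : ℝ)
    (ha : 0 < a) (hb : 0 < b) (hc : 0 < c) (hd : 0 < d) :
    {t : ℝ | 0 < t ∧
      deriv (fun t : ℝ => a * t ^ 2 - b * t ^ (twoStar N)
        - c * t ^ (gam N p) - d * t ^ (gam N q)) t = 0}.encard ≤ 2 := by
  set S : Set ℝ := {t : ℝ | 0 < t ∧
      deriv (fun t : ℝ => a * t ^ 2 - b * t ^ (twoStar N)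
        - c * t ^ (gam N p) - d * t ^ (gam N q)) t = 0} with hS
  -- basic numerical facts
  have hN3 : (3 : ℝ) ≤ (N : ℝ) := by exact_mod_cast hN
  have hNpos : (0 : ℝ) < (N : ℝ) := by linarith
  have hN2 : (0 : ℝ) < (N : ℝ) - 2 := by linarith
  set A := twoStar N with hAdef
  set gp := gam N p with hgpdef
  set gq := gam N q with hgqdef
  have hA2 : 2 < A := by
    rw [hAdef, twoStar, lt_div_iff₀ hN2]; linarith
  have hgp0 : 0 < gp := by
    rw [hgpdef, gam]
    have h : 0 < p - 2 := by linarith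
    positivity
  have hgp2 : gp < 2 := by
    have : (N : ℝ) * (p - 2) < 4 := by
      have := mul_lt_mul_of_pos_left hpN hNpos
      have h4 : (N : ℝ) * (2 + 4 / (N : ℝ)) = 2 * N + 4 := by field_simp
      nlinarith [this]
    rw [hgpdef, gam]; linarith
  have hgq2 : 2 < gq := by
    have : (4 : ℝ) < (N : ℝ) * (q - 2) := by
      have := mul_lt_mul_of_pos_left hNq hNpos
      have h4 : (N : ℝ) * (2 + 4 / (N : ℝ)) = 2 * N + 4 := by field_simp
      nlinarith [this]
    rw [hgqdef, gam]; linarith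
  have hgqA : gq < A := by
    rw [hgqdef, gam, hAdef, twoStar]
    rw [div_lt_div_iff₀ (by norm_num) hN2]
    have hqA : q < 2 * (N : ℝ) / ((N : ℝ) - 2) := hq
    rw [lt_div_iff₀ hN2] at hqA
    nlinarith
  have hgpA : gp < A := by linarith
  -- the function G whose zeros contain S
  set G : ℝ → ℝ := fun t => b * A * t ^ (A - 2) + c * gp * t ^ (gp - 2)
      + d * gq * t ^ (gq - 2) - 2 * a with hGdef
  -- derivative of G
  set G' : ℝ → ℝ := fun t => b * A * ((A - 2) * t ^ (A - 3))
      + c * gp * ((gp - 2) * t ^ (gp - 3)) + d * gq * ((gq - 2) * t ^ (gq - 3)) with hG'def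
  have hGderiv : ∀ x : ℝ, 0 < x → HasDerivAt G (G' x) x := by
    intro x hx
    have h1 : HasDerivAt (fun t : ℝ => t ^ (A - 2)) ((A - 2) * x ^ (A - 2 - 1)) x :=
      Real.hasDerivAt_rpow_const (Or.inl hx.ne')
    have h2 : HasDerivAt (fun t : ℝ => t ^ (gp - 2)) ((gp - 2) * x ^ (gp - 2 - 1)) x :=
      Real.hasDerivAt_rpow_const (Or.inl hx.ne')
    have h3 : HasDerivAt (fun t : ℝ => t ^ (gq - 2)) ((gq - 2) * x ^ (gq - 2 - 1)) x :=
      Real.hasDerivAt_rpow_const (Or.inl hx.ne')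
    have := (((h1.const_mul (b * A)).add (h2.const_mul (c * gp))).add
      (h3.const_mul (d * gq))).sub_const (2 * a)
    refine this.congr_deriv ?_
    rw [hG'def]
    norm_num [show A - 2 - 1 = A - 3 by ring, show gp - 2 - 1 = gp - 3 by ring,
      show gq - 2 - 1 = gq - 3 by ring]
  -- every element of S is a zero of G
  have hSG : ∀ t ∈ S, G t = 0 := by
    rintro t ⟨ht, hderiv⟩
    have h0 : HasDerivAt (fun t : ℝ => a * t ^ 2) (a * (2 * t)) t := by
      simpa using (hasDerivAt_pow 2 t).const_mul a
    have h1 : HasDerivAt (fun s : ℝ => b * s ^ A) (b * (A * t ^ (A - 1))) t :=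
      (Real.hasDerivAt_rpow_const (Or.inl ht.ne')).const_mul b
    have h2 : HasDerivAt (fun s : ℝ => c * s ^ gp) (c * (gp * t ^ (gp - 1))) t :=
      (Real.hasDerivAt_rpow_const (Or.inl ht.ne')).const_mul c
    have h3 : HasDerivAt (fun s : ℝ => d * s ^ gq) (d * (gq * t ^ (gq - 1))) t :=
      (Real.hasDerivAt_rpow_const (Or.inl ht.ne')).const_mul d
    have hl : HasDerivAt (fun t : ℝ => a * t ^ 2 - b * t ^ A - c * t ^ gp - d * t ^ gq)
        (a * (2 * t) - b * (A * t ^ (A - 1)) - c * (gp * t ^ (gp - 1))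
          - d * (gq * t ^ (gq - 1))) t := ((h0.sub h1).sub h2).sub h3
    have heq : a * (2 * t) - b * (A * t ^ (A - 1)) - c * (gp * t ^ (gp - 1))
        - d * (gq * t ^ (gq - 1)) = 0 := by rw [← hl.deriv]; exact hderiv
    have hsplit : ∀ e : ℝ, t ^ (e - 1) = t ^ (e - 2) * t := by
      intro e
      rw [show e - 1 = (e - 2) + 1 by ring, Real.rpow_add ht, Real.rpow_one]
    rw [hsplit A, hsplit gp, hsplit gq] at heq
    have : t * G t = 0 := by rw [hGdef]; ring_nf; ring_nf at heq; linarith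
    rcases mul_eq_zero.1 this with h | h
    · exact absurd h ht.ne'
    · exact h
  -- G' has at most one positive zero
  have hG'zero : ∀ s₁ s₂ : ℝ, 0 < s₁ → s₁ < s₂ → G' s₁ = 0 → G' s₂ = 0 → False := by
    intro s₁ s₂ hs₁ hlt hz₁ hz₂
    have hs₂ : 0 < s₂ := hs₁.trans hlt
    -- multiply G' s = 0 by s ^ (3 - gp)
    have key : ∀ s : ℝ, 0 < s → G' s = 0 →
        b * A * (A - 2) * s ^ (A - gp) + d * gq * (gq - 2) * s ^ (gq - gp)
          = c * gp * (2 - gp) := by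
      intro s hs hz
      have hmul : ∀ e : ℝ, s ^ (e - 3) * s ^ (3 - gp) = s ^ (e - gp) := by
        intro e
        rw [← Real.rpow_add hs]; congr 1; ring
      have := congrArg (fun x => x * s ^ (3 - gp)) hz
      simp only [hG'def] at this
      have hexp : s ^ (gp - 3) * s ^ (3 - gp) = 1 := by
        rw [← Real.rpow_add hs, show gp - 3 + (3 - gp) = 0 by ring, Real.rpow_zero]
      have lhs : (b * A * ((A - 2) * s ^ (A - 3)) + c * gp * ((gp - 2) * s ^ (gp - 3))
          + d * gq * ((gq - 2) * s ^ (gq - 3))) * s ^ (3 - gp)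
          = b * A * (A - 2) * s ^ (A - gp) + d * gq * (gq - 2) * s ^ (gq - gp)
            - c * gp * (2 - gp) := by
        rw [← hmul A, ← hmul gq]
        linear_combination (c * gp * (gp - 2)) * hexp
      rw [lhs] at this
      simp at this
      linarith
    have k₁ := key s₁ hs₁ hz₁
    have k₂ := key s₂ hs₂ hz₂
    have hmono₁ : s₁ ^ (A - gp) < s₂ ^ (A - gp) :=
      Real.rpow_lt_rpow hs₁.le hlt (by linarith)
    have hmono₂ : s₁ ^ (gq - gp) < s₂ ^ (gq - gp) :=
      Real.rpow_lt_rpow hs₁.le hlt (by linarith)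
    have hc₁ : 0 < b * A * (A - 2) :=
      mul_pos (mul_pos hb (by linarith)) (by linarith)
    have hc₂ : 0 < d * gq * (gq - 2) :=
      mul_pos (mul_pos hd (by linarith)) (by linarith)
    have := add_lt_add (mul_lt_mul_of_pos_left hmono₁ hc₁)
      (mul_lt_mul_of_pos_left hmono₂ hc₂)
    linarith
  -- hence G has at most two positive zeros
  have hkey : ∀ t₁ t₂ t₃ : ℝ, t₁ ∈ S → t₂ ∈ S → t₃ ∈ S → t₁ < t₂ → t₂ < t₃ → False := by
    intro t₁ t₂ t₃ h₁ h₂ h₃ h12 h23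
    have ht₁ : 0 < t₁ := h₁.1
    have ht₂ : 0 < t₂ := h₂.1
    have ht₃ : 0 < t₃ := h₃.1
    have rolle : ∀ u v : ℝ, 0 < u → u < v → G u = 0 → G v = 0 →
        ∃ s ∈ Set.Ioo u v, G' s = 0 := by
      intro u v hu huv hGu hGv
      apply exists_hasDerivAt_eq_zero huv
      · intro x hx
        exact (hGderiv x (lt_of_lt_of_le hu hx.1)).continuousAt.continuousWithinAt
      · rw [hGu, hGv]
      · intro x hx
        exact hGderiv x (hu.trans hx.1)
    obtain ⟨s₁, hs₁, hz₁⟩ := rolle t₁ t₂ ht₁ h12 (hSG t₁ h₁) (hSG t₂ h₂)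
    obtain ⟨s₂, hs₂, hz₂⟩ := rolle t₂ t₃ ht₂ h23 (hSG t₂ h₂) (hSG t₃ h₃)
    exact hG'zero s₁ s₂ (ht₁.trans hs₁.1) (hs₁.2.trans hs₂.1) hz₁ hz₂
  -- conclude: card bound
  by_contra hcard
  push_neg at hcard
  obtain ⟨x, y, hx, hy, hxy⟩ := Set.one_lt_encard_iff.1 (lt_trans (by norm_num : (1:ℕ∞) < 2) hcard)
  have hnsub : ¬ S ⊆ ({x, y} : Set ℝ) := by
    intro hsub
    have := Set.encard_le_encard hsub
    rw [Set.encard_pair hxy] at this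
    exact absurd this (not_le.2 hcard)
  obtain ⟨z, hz, hznot⟩ := Set.not_subset.1 hnsub
  have hzx : z ≠ x := fun h => hznot (by simp [h])
  have hzy : z ≠ y := fun h => hznot (by simp [h])
  -- order the three distinct elements x, y, z and apply hkey
  rcases lt_trichotomy x y with h1 | h1 | h1
  · rcases lt_trichotomy z x with h2 | h2 | h2
    · exact hkey z x y hz hx hy h2 h1
    · exact hzx h2
    · rcases lt_trichotomy z y with h3 | h3 | h3
      · exact hkey x z y hx hz hy h2 h3
      · exact hzy h3
      · exact hkey x y z hx hy hz h1 h3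
  · exact hxy h1
  · rcases lt_trichotomy z y with h2 | h2 | h2
    · exact hkey z y x hz hy hx h2 h1
    · exact hzy h2
    · rcases lt_trichotomy z x with h3 | h3 | h3
      · exact hkey y z x hy hz hx h2 h3
      · exact hzx h3
      · exact hkey y x z hy hx hz h1 h3
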